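/- (Family 3) Let Q = [[a,b],[c,d]] be an invertible 2×2 complex matrix with a ≠ 0, d ≠ 0 and a·conj(b) + c·conj(d) = 0. Let p, q ∈ ℂ satisfy |p|·|a|² = |d|² and |q|·|d|² = |a|². Let R be the 4×4 matrix with rows [0,0,0,p], [0,0,1,0], [0,1,0,0], [q,0,0,0], let A = Q ⊗ₖ Q, and let k ∈ ℂ with |k| = 1. Then k·A·R·A⁻¹·T is unitary and satisfies the braided Yang–Baxter equation. -/

import Mathlib

open Matrix Kronecker

/-- Identify `Fin 2 × Fin 2` with `Fin 4` using the basis ordering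
`v₀⊗v₀, v₀⊗v₁, v₁⊗v₀, v₁⊗v₁`. -/
def toFin4 : Fin 2 × Fin 2 → Fin 4 := fun p => ⟨2 * p.1.val + p.2.val, by omega⟩

/-- View an explicit `4 × 4` matrix as a matrix acting on `ℂ² ⊗ ℂ²`. -/
def m44 (M : Matrix (Fin 4) (Fin 4) ℂ) : Matrix (Fin 2 × Fin 2) (Fin 2 × Fin 2) ℂ :=
  M.submatrix toFin4 toFin4

/-- The swap matrix `T`, with `T (vᵢ ⊗ vⱼ) = vⱼ ⊗ vᵢ`. -/
def swapT : Matrix (Fin 2 × Fin 2) (Fin 2 × Fin 2) ℂ :=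
  m44 !![1, 0, 0, 0; 0, 0, 1, 0; 0, 1, 0, 0; 0, 0, 0, 1]

/-- The braided Yang–Baxter equation for a matrix acting on `ℂ² ⊗ ℂ²`. -/
def braidedYB (R : Matrix (Fin 2 × Fin 2) (Fin 2 × Fin 2) ℂ) : Prop :=
  let R12 := Matrix.reindex (Equiv.prodAssoc (Fin 2) (Fin 2) (Fin 2))
      (Equiv.prodAssoc (Fin 2) (Fin 2) (Fin 2)) (R ⊗ₖ (1 : Matrix (Fin 2) (Fin 2) ℂ))
  let R23 := (1 : Matrix (Fin 2) (Fin 2) ℂ) ⊗ₖ R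
  R12 * R23 * R12 = R23 * R12 * R23

/-! ### Auxiliary lemmas -/

lemma braidedYB_smul (k : ℂ) (N : Matrix (Fin 2 × Fin 2) (Fin 2 × Fin 2) ℂ)
    (hN : braidedYB N) : braidedYB (k • N) := by
  unfold braidedYB at *
  dsimp only at hN ⊢
  set e3 := Equiv.prodAssoc (Fin 2) (Fin 2) (Fin 2)
  have h12 : Matrix.reindex e3 e3 ((k • N) ⊗ₖ (1 : Matrix (Fin 2) (Fin 2) ℂ))
      = k • Matrix.reindex e3 e3 (N ⊗ₖ (1 : Matrix (Fin 2) (Fin 2) ℂ)) := by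
    rw [Matrix.smul_kronecker]; ext ⟨⟩ ⟨⟩; simp
  have h23 : (1 : Matrix (Fin 2) (Fin 2) ℂ) ⊗ₖ (k • N)
      = k • ((1 : Matrix (Fin 2) (Fin 2) ℂ) ⊗ₖ N) := by
    rw [Matrix.kronecker_smul]
  rw [h12, h23]
  simp only [smul_mul_assoc, mul_smul_comm]
  rw [hN]

lemma braidedYB_conj (S S' : Matrix (Fin 2) (Fin 2) ℂ) (h1 : S * S' = 1) (h2 : S' * S = 1)
    (B : Matrix (Fin 2 × Fin 2) (Fin 2 × Fin 2) ℂ) (hB : braidedYB B) :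
    braidedYB ((S ⊗ₖ S) * B * (S' ⊗ₖ S')) := by
  unfold braidedYB at *
  dsimp only at hB ⊢
  set e3 := Equiv.prodAssoc (Fin 2) (Fin 2) (Fin 2)
  set C := S ⊗ₖ (S ⊗ₖ S) with hC
  set C' := S' ⊗ₖ (S' ⊗ₖ S') with hC'
  have hC'C : C' * C = 1 := by
    rw [hC, hC', ← Matrix.mul_kronecker_mul, ← Matrix.mul_kronecker_mul, h2,
      Matrix.one_kronecker_one, Matrix.one_kronecker_one]
  have hR23 : (1 : Matrix (Fin 2) (Fin 2) ℂ) ⊗ₖ ((S ⊗ₖ S) * B * (S' ⊗ₖ S'))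
      = C * ((1 : Matrix (Fin 2) (Fin 2) ℂ) ⊗ₖ B) * C' := by
    rw [hC, hC', ← Matrix.mul_kronecker_mul, ← Matrix.mul_kronecker_mul, mul_one, h1]
  have hR12 : Matrix.reindex e3 e3 (((S ⊗ₖ S) * B * (S' ⊗ₖ S')) ⊗ₖ (1 : Matrix (Fin 2) (Fin 2) ℂ))
      = C * Matrix.reindex e3 e3 (B ⊗ₖ (1 : Matrix (Fin 2) (Fin 2) ℂ)) * C' := by
    have step : ((S ⊗ₖ S) * B * (S' ⊗ₖ S')) ⊗ₖ (1 : Matrix (Fin 2) (Fin 2) ℂ)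
        = ((S ⊗ₖ S) ⊗ₖ S) * (B ⊗ₖ (1 : Matrix (Fin 2) (Fin 2) ℂ)) * ((S' ⊗ₖ S') ⊗ₖ S') := by
      rw [← Matrix.mul_kronecker_mul, ← Matrix.mul_kronecker_mul, mul_one, h1]
    rw [step, ← Matrix.reindexAlgEquiv_apply ℂ ℂ e3, _root_.map_mul, _root_.map_mul,
      Matrix.reindexAlgEquiv_apply, Matrix.reindexAlgEquiv_apply, Matrix.reindexAlgEquiv_apply]
    rw [show (Matrix.reindex e3 e3) ((S ⊗ₖ S) ⊗ₖ S) = C from Matrix.kronecker_assoc S S S,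
      show (Matrix.reindex e3 e3) ((S' ⊗ₖ S') ⊗ₖ S') = C' from Matrix.kronecker_assoc S' S' S']
  rw [hR12, hR23]
  calc (C * Matrix.reindex e3 e3 (B ⊗ₖ 1) * C') * (C * (1 ⊗ₖ B) * C') *
        (C * Matrix.reindex e3 e3 (B ⊗ₖ 1) * C')
      = C * (Matrix.reindex e3 e3 (B ⊗ₖ 1) * (1 ⊗ₖ B) * Matrix.reindex e3 e3 (B ⊗ₖ 1)) * C' := by
        simp only [Matrix.mul_assoc]
        rw [← Matrix.mul_assoc C' C, hC'C, Matrix.one_mul, ← Matrix.mul_assoc C' C, hC'C,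
          Matrix.one_mul]
    _ = C * ((1 ⊗ₖ B) * Matrix.reindex e3 e3 (B ⊗ₖ 1) * (1 ⊗ₖ B)) * C' := by rw [hB]
    _ = (C * (1 ⊗ₖ B) * C') * (C * Matrix.reindex e3 e3 (B ⊗ₖ 1) * C') * (C * (1 ⊗ₖ B) * C') := by
        simp only [Matrix.mul_assoc]
        rw [← Matrix.mul_assoc C' C, hC'C, Matrix.one_mul, ← Matrix.mul_assoc C' C, hC'C,
          Matrix.one_mul]

set_option maxHeartbeats 4000000 in
lemma braidedYB_B (p q : ℂ) :
    braidedYB (m44 !![0,0,0,p; 0,1,0,0; 0,0,1,0; q,0,0,0]) := by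
  unfold braidedYB
  dsimp only
  ext ⟨i, j, l⟩ ⟨i', j', l'⟩
  fin_cases i <;> fin_cases j <;> fin_cases l <;> fin_cases i' <;> fin_cases j' <;> fin_cases l' <;>
  · simp only [Matrix.mul_apply, Fintype.sum_prod_type, Matrix.reindex_apply,
      Matrix.submatrix_apply, Matrix.kroneckerMap_apply, Equiv.prodAssoc_symm_apply,
      Matrix.one_apply, Fin.sum_univ_two, m44, toFin4]
    norm_num

lemma swap_comm (S : Matrix (Fin 2) (Fin 2) ℂ) : (S ⊗ₖ S) * swapT = swapT * (S ⊗ₖ S) := by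
  ext ⟨i,j⟩ ⟨i',j'⟩
  fin_cases i <;> fin_cases j <;> fin_cases i' <;> fin_cases j' <;>
  · simp only [Matrix.mul_apply, Fintype.sum_prod_type, Matrix.kroneckerMap_apply,
      Fin.sum_univ_two, swapT, m44, toFin4, Matrix.submatrix_apply]
    norm_num
    try ring

lemma RT_eq (p q : ℂ) :
    m44 !![0,0,0,p; 0,0,1,0; 0,1,0,0; q,0,0,0] * swapT
      = m44 !![0,0,0,p; 0,1,0,0; 0,0,1,0; q,0,0,0] := by
  ext ⟨i,j⟩ ⟨i',j'⟩
  fin_cases i <;> fin_cases j <;> fin_cases i' <;> fin_cases j' <;>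
  · simp only [Matrix.mul_apply, Fintype.sum_prod_type, Fin.sum_univ_two, swapT, m44, toFin4,
      Matrix.submatrix_apply]
    norm_num

lemma kronecker_conjT (X Y : Matrix (Fin 2) (Fin 2) ℂ) : (X ⊗ₖ Y)ᴴ = Xᴴ ⊗ₖ Yᴴ := by
  ext ⟨i,j⟩ ⟨l,m⟩
  simp [conjTranspose_apply, kroneckerMap_apply]

lemma keyB_lemma (p q : ℂ) (α β : ℝ)
    (hp2 : p * (starRingEnd ℂ) p = ((‖p‖ ^ 2 : ℝ) : ℂ))
    (hq2 : q * (starRingEnd ℂ) q = ((‖q‖ ^ 2 : ℝ) : ℂ))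
    (s2C : ((‖p‖ ^ 2 : ℝ) : ℂ) * (α:ℂ) ^ 2 = (β:ℂ) ^ 2)
    (s1C : ((‖q‖ ^ 2 : ℝ) : ℂ) * (β:ℂ) ^ 2 = (α:ℂ) ^ 2) :
    (m44 !![0,0,0,p; 0,1,0,0; 0,0,1,0; q,0,0,0])ᴴ *
        ((!![(α:ℂ), 0; 0, (β:ℂ)] ⊗ₖ !![(α:ℂ), 0; 0, (β:ℂ)])) *
        m44 !![0,0,0,p; 0,1,0,0; 0,0,1,0; q,0,0,0]
      = !![(α:ℂ), 0; 0, (β:ℂ)] ⊗ₖ !![(α:ℂ), 0; 0, (β:ℂ)] := by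
  ext ⟨i,j⟩ ⟨i',j'⟩
  fin_cases i <;> fin_cases j <;> fin_cases i' <;> fin_cases j' <;>
  · simp only [Matrix.mul_apply, Fintype.sum_prod_type, Matrix.kroneckerMap_apply,
      Fin.sum_univ_two, m44, toFin4, Matrix.submatrix_apply, Matrix.conjTranspose_apply]
    norm_num
    try first
      | linear_combination ((β:ℂ) * β) * hq2 + s1C
      | linear_combination ((α:ℂ) * α) * hp2 + s2C
      | ring

lemma QHQ_lemma (a b c d : ℂ) (hc : a * (starRingEnd ℂ) b + c * (starRingEnd ℂ) d = 0) :
    (!![a,b;c,d] : Matrix (Fin 2) (Fin 2) ℂ)ᴴ * !![a,b;c,d]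
      = !![((‖a‖ ^ 2 + ‖c‖ ^ 2 : ℝ) : ℂ), 0;
            0, ((‖b‖ ^ 2 + ‖d‖ ^ 2 : ℝ) : ℂ)] := by
  have hcc : (starRingEnd ℂ) a * b + (starRingEnd ℂ) c * d = 0 := by
    have := congrArg (starRingEnd ℂ) hc
    simpa using this
  have ma : a * (starRingEnd ℂ) a = ((‖a‖ ^ 2 : ℝ) : ℂ) := by
    rw [Complex.mul_conj, Complex.sq_norm]
  have mb : b * (starRingEnd ℂ) b = ((‖b‖ ^ 2 : ℝ) : ℂ) := by
    rw [Complex.mul_conj, Complex.sq_norm]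
  have mc : c * (starRingEnd ℂ) c = ((‖c‖ ^ 2 : ℝ) : ℂ) := by
    rw [Complex.mul_conj, Complex.sq_norm]
  have md : d * (starRingEnd ℂ) d = ((‖d‖ ^ 2 : ℝ) : ℂ) := by
    rw [Complex.mul_conj, Complex.sq_norm]
  ext i j
  fin_cases i <;> fin_cases j <;>
  · simp [Matrix.mul_apply, Fin.sum_univ_two, Matrix.conjTranspose_apply]
    push_cast at ma mb mc md ⊢
    first
      | linear_combination ma + mc
      | linear_combination mb + md
      | linear_combination hcc
      | linear_combination hc

theorem family3_unitary_solution (p q k a b c d : ℂ)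
    (hk : ‖k‖ = 1)
    (ha : a ≠ 0) (hd : d ≠ 0)
    (hdet : IsUnit (!![a, b; c, d] : Matrix (Fin 2) (Fin 2) ℂ).det)
    (hc : a * (starRingEnd ℂ) b + c * (starRingEnd ℂ) d = 0)
    (hp : ‖p‖ * ‖a‖ ^ 2 = ‖d‖ ^ 2)
    (hq : ‖q‖ * ‖d‖ ^ 2 = ‖a‖ ^ 2) :
    let Q : Matrix (Fin 2) (Fin 2) ℂ := !![a, b; c, d]
    let A := Q ⊗ₖ Q
    let R := m44 !![0, 0, 0, p; 0, 0, 1, 0; 0, 1, 0, 0; q, 0, 0, 0]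
    let M := k • (A * R * A⁻¹ * swapT)
    Mᴴ * M = 1 ∧ braidedYB M := by
  intro Q A R M
  have hM0 : M = k • ((!![a,b;c,d] ⊗ₖ !![a,b;c,d]) *
      m44 !![0, 0, 0, p; 0, 0, 1, 0; 0, 1, 0, 0; q, 0, 0, 0] *
      (!![a,b;c,d] ⊗ₖ !![a,b;c,d])⁻¹ * swapT) := rfl
  -- determinant nonzero
  have he : a * d - b * c ≠ 0 := by
    rw [Matrix.det_fin_two_of] at hdet
    exact hdet.ne_zero
  -- inverse of Q
  have hQQ' : (!![a,b;c,d] : Matrix (Fin 2) (Fin 2) ℂ) *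
      ((a*d-b*c)⁻¹ • !![d,-b;-c,a]) = 1 := by
    have h' : ((a*d-b*c)⁻¹ • !![d,-b;-c,a] : Matrix (Fin 2) (Fin 2) ℂ) *
        !![a,b;c,d] = 1 := by
      ext i j
      fin_cases i <;> fin_cases j <;>
        simp [Matrix.mul_apply, Fin.sum_univ_two, Matrix.one_apply] <;>
        field_simp <;> ring
    exact mul_eq_one_comm.mp h'
  have hQ'Q : ((a*d-b*c)⁻¹ • !![d,-b;-c,a] : Matrix (Fin 2) (Fin 2) ℂ) *
      !![a,b;c,d] = 1 := by
    ext i j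
    fin_cases i <;> fin_cases j <;>
      simp [Matrix.mul_apply, Fin.sum_univ_two, Matrix.one_apply] <;>
      field_simp <;> ring
  have hAinv : ((!![a,b;c,d] ⊗ₖ !![a,b;c,d]) : Matrix (Fin 2 × Fin 2) (Fin 2 × Fin 2) ℂ)⁻¹
      = ((a*d-b*c)⁻¹ • !![d,-b;-c,a]) ⊗ₖ ((a*d-b*c)⁻¹ • !![d,-b;-c,a]) := by
    rw [Matrix.inv_kronecker, Matrix.inv_eq_right_inv hQQ']
  have hAA' : (!![a,b;c,d] ⊗ₖ !![a,b;c,d]) *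
      (((a*d-b*c)⁻¹ • !![d,-b;-c,a]) ⊗ₖ ((a*d-b*c)⁻¹ • !![d,-b;-c,a])) = 1 := by
    rw [← Matrix.mul_kronecker_mul, hQQ', Matrix.one_kronecker_one]
  -- the conjugated-braid form of M
  have hMform : M = k • ((!![a,b;c,d] ⊗ₖ !![a,b;c,d]) *
      m44 !![0,0,0,p; 0,1,0,0; 0,0,1,0; q,0,0,0] *
      (((a*d-b*c)⁻¹ • !![d,-b;-c,a]) ⊗ₖ ((a*d-b*c)⁻¹ • !![d,-b;-c,a]))) := by
    rw [hM0, hAinv, Matrix.mul_assoc _ _ swapT, _root_.swap_comm, ← Matrix.mul_assoc,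
      Matrix.mul_assoc _ _ swapT, RT_eq]
  -- scalar facts
  have ha2 : (0:ℝ) < ‖a‖ ^ 2 := pow_pos (norm_pos_iff.mpr ha) 2
  have hd2 : (0:ℝ) < ‖d‖ ^ 2 := pow_pos (norm_pos_iff.mpr hd) 2
  have habs : ‖c‖ ^ 2 * ‖d‖ ^ 2 = ‖a‖ ^ 2 * ‖b‖ ^ 2 := by
    have h1 : c * (starRingEnd ℂ) d = -(a * (starRingEnd ℂ) b) := by linear_combination hc
    have h2 := congrArg (fun x : ℂ => ‖x‖) h1
    simp only [norm_mul, norm_neg, Complex.norm_conj] at h2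
    have h3 := congrArg (fun x : ℝ => x ^ 2) h2
    simp only [mul_pow] at h3
    exact h3
  have hpz : ‖p‖ * ‖c‖ ^ 2 = ‖b‖ ^ 2 := by
    have h4 : (‖p‖ * ‖c‖ ^ 2) * ‖d‖ ^ 2
        = ‖b‖ ^ 2 * ‖d‖ ^ 2 := by
      linear_combination ‖p‖ * habs + ‖b‖ ^ 2 * hp
    exact mul_right_cancel₀ hd2.ne' h4
  have hqy : ‖q‖ * ‖b‖ ^ 2 = ‖c‖ ^ 2 := by
    have h4 : (‖q‖ * ‖b‖ ^ 2) * ‖a‖ ^ 2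
        = ‖c‖ ^ 2 * ‖a‖ ^ 2 := by
      linear_combination (-(‖q‖)) * habs + ‖c‖ ^ 2 * hq
    exact mul_right_cancel₀ ha2.ne' h4
  have s2real : ‖p‖ ^ 2 * (‖a‖ ^ 2 + ‖c‖ ^ 2) ^ 2
      = (‖b‖ ^ 2 + ‖d‖ ^ 2) ^ 2 := by
    have h5 : ‖p‖ * (‖a‖ ^ 2 + ‖c‖ ^ 2)
        = ‖b‖ ^ 2 + ‖d‖ ^ 2 := by linear_combination hp + hpz
    rw [← h5]; ring
  have s1real : ‖q‖ ^ 2 * (‖b‖ ^ 2 + ‖d‖ ^ 2) ^ 2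
      = (‖a‖ ^ 2 + ‖c‖ ^ 2) ^ 2 := by
    have h5 : ‖q‖ * (‖b‖ ^ 2 + ‖d‖ ^ 2)
        = ‖a‖ ^ 2 + ‖c‖ ^ 2 := by linear_combination hq + hqy
    rw [← h5]; ring
  have hp2 : p * (starRingEnd ℂ) p = ((‖p‖ ^ 2 : ℝ) : ℂ) := by
    rw [Complex.mul_conj, Complex.sq_norm]
  have hq2 : q * (starRingEnd ℂ) q = ((‖q‖ ^ 2 : ℝ) : ℂ) := by
    rw [Complex.mul_conj, Complex.sq_norm]
  have s2C : ((‖p‖ ^ 2 : ℝ) : ℂ) *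
        ((‖a‖ ^ 2 + ‖c‖ ^ 2 : ℝ) : ℂ) ^ 2
      = ((‖b‖ ^ 2 + ‖d‖ ^ 2 : ℝ) : ℂ) ^ 2 := by
    exact_mod_cast congrArg (fun x : ℝ => (x : ℂ)) s2real
  have s1C : ((‖q‖ ^ 2 : ℝ) : ℂ) *
        ((‖b‖ ^ 2 + ‖d‖ ^ 2 : ℝ) : ℂ) ^ 2
      = ((‖a‖ ^ 2 + ‖c‖ ^ 2 : ℝ) : ℂ) ^ 2 := by
    exact_mod_cast congrArg (fun x : ℝ => (x : ℂ)) s1real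
  have hkk : (starRingEnd ℂ) k * k = 1 := by
    have : k * (starRingEnd ℂ) k = 1 := by
      rw [Complex.mul_conj, Complex.normSq_eq_norm_sq, hk]; norm_num
    linear_combination this
  have hkk2 : (star k) * k = 1 := by
    have h6 : k * (starRingEnd ℂ) k = 1 := by
      rw [Complex.mul_conj, Complex.normSq_eq_norm_sq, hk]; norm_num
    rw [Complex.star_def]
    linear_combination h6
  constructor
  · -- unitarity
    rw [hMform]
    have keyG : ((!![a,b;c,d] : Matrix (Fin 2) (Fin 2) ℂ) ⊗ₖ !![a,b;c,d])ᴴ *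
        (!![a,b;c,d] ⊗ₖ !![a,b;c,d])
        = !![((‖a‖ ^ 2 + ‖c‖ ^ 2 : ℝ) : ℂ), 0;
              0, ((‖b‖ ^ 2 + ‖d‖ ^ 2 : ℝ) : ℂ)] ⊗ₖ
          !![((‖a‖ ^ 2 + ‖c‖ ^ 2 : ℝ) : ℂ), 0;
              0, ((‖b‖ ^ 2 + ‖d‖ ^ 2 : ℝ) : ℂ)] := by
      rw [kronecker_conjT, ← Matrix.mul_kronecker_mul, QHQ_lemma a b c d hc]
    have keyB := keyB_lemma p q (‖a‖ ^ 2 + ‖c‖ ^ 2)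
      (‖b‖ ^ 2 + ‖d‖ ^ 2) hp2 hq2 s2C s1C
    set Bm := m44 !![0,0,0,p; 0,1,0,0; 0,0,1,0; q,0,0,0] with hBm
    set Am := (!![a,b;c,d] : Matrix (Fin 2) (Fin 2) ℂ) ⊗ₖ !![a,b;c,d] with hAm
    set A'm := (((a*d-b*c)⁻¹ • !![d,-b;-c,a] : Matrix (Fin 2) (Fin 2) ℂ)) ⊗ₖ
      ((a*d-b*c)⁻¹ • !![d,-b;-c,a]) with hA'm
    set Gm := (!![((‖a‖ ^ 2 + ‖c‖ ^ 2 : ℝ) : ℂ), 0;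
              0, ((‖b‖ ^ 2 + ‖d‖ ^ 2 : ℝ) : ℂ)] :
        Matrix (Fin 2) (Fin 2) ℂ) ⊗ₖ
          !![((‖a‖ ^ 2 + ‖c‖ ^ 2 : ℝ) : ℂ), 0;
              0, ((‖b‖ ^ 2 + ‖d‖ ^ 2 : ℝ) : ℂ)] with hGm
    have hXX : (Am * Bm * A'm)ᴴ * (Am * Bm * A'm) = 1 := by
      calc (Am * Bm * A'm)ᴴ * (Am * Bm * A'm)
          = A'mᴴ * (Bmᴴ * ((Amᴴ * Am) * (Bm * A'm))) := by
            simp only [Matrix.conjTranspose_mul, Matrix.mul_assoc]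
        _ = A'mᴴ * (Bmᴴ * (Gm * (Bm * A'm))) := by rw [keyG]
        _ = A'mᴴ * ((Bmᴴ * Gm * Bm) * A'm) := by simp only [Matrix.mul_assoc]
        _ = A'mᴴ * (Gm * A'm) := by rw [keyB]
        _ = A'mᴴ * ((Amᴴ * Am) * A'm) := by rw [keyG]
        _ = (Am * A'm)ᴴ * (Am * A'm) := by
            simp only [Matrix.conjTranspose_mul, Matrix.mul_assoc]
        _ = 1 := by rw [hAA', Matrix.conjTranspose_one, Matrix.one_mul]
    rw [Matrix.conjTranspose_smul, smul_mul_assoc, mul_smul_comm, hXX, smul_smul, hkk2, one_smul]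
  · -- braided Yang-Baxter
    rw [hMform]
    exact braidedYB_smul k _ (braidedYB_conj _ _ hQQ' hQ'Q _ (braidedYB_B p q))
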